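/- arXiv:2109.12456 — 2 statements merged into one kernel-verified Lean document; each statement's English description precedes it below -/
import Mathlib

section
/- If h : ℝ → ℝ is monotone nondecreasing and applied elementwise, and l ≤ z ≤ u coordinatewise, then h(W((u+l)/2) + b − |W|((u−l)/2)) ≤ h(W z + b) ≤ h(W((u+l)/2) + b + |W|((u−l)/2)) coordinatewise. -/
open Matrix Finset

/-- The ℓ_p norm on ℝ^ι for a real exponent p. -/
noncomputable def lpNorm {ι : Type*} [Fintype ι] (p : ℝ) (x : ι → ℝ) : ℝ :=
  (∑ i, |x i| ^ p) ^ (1 / p)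

/-- midpoint–radius bound composed with a monotone elementwise activation. -/
theorem affine_activation_box_bound {m n : ℕ}
    (W : Matrix (Fin m) (Fin n) ℝ) (b : Fin m → ℝ) (l u z : Fin n → ℝ)
    (h : ℝ → ℝ) (hmono : Monotone h)
    (hlu : ∀ j, l j ≤ u j) (hz : ∀ j, l j ≤ z j ∧ z j ≤ u j) :
    ∀ i : Fin m,
      h ((W.mulVec (fun j => (u j + l j) / 2) + b) i
          - (W.map (fun x => |x|)).mulVec (fun j => (u j - l j) / 2) i)
        ≤ h ((W.mulVec z + b) i) ∧
      h ((W.mulVec z + b) i)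
        ≤ h ((W.mulVec (fun j => (u j + l j) / 2) + b) i
          + (W.map (fun x => |x|)).mulVec (fun j => (u j - l j) / 2) i) := by
  intro i
  have key : |∑ j, W i j * z j - ∑ j, W i j * ((u j + l j) / 2)|
      ≤ ∑ j, |W i j| * ((u j - l j) / 2) := by
    rw [← Finset.sum_sub_distrib]
    refine (Finset.abs_sum_le_sum_abs _ _).trans (Finset.sum_le_sum fun j _ => ?_)
    rw [← mul_sub, abs_mul]
    exact mul_le_mul_of_nonneg_left (by
      rw [abs_le]; constructor <;> [linarith [(hz j).1]; linarith [(hz j).2]])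
      (abs_nonneg _)
  rw [abs_le] at key
  constructor <;> apply hmono <;>
    simp only [Matrix.mulVec, Matrix.map_apply, Pi.add_apply, dotProduct,
      Matrix.map, Matrix.of_apply] <;> linarith [key.1, key.2]
end

section
/- Soundness of interval bound propagation for a K-layer network: define recursively the interval bounds [l^{k+1}, u^{k+1}] for z^{k+1} = h_k(W_k z^k + b_k) via the midpoint–radius formulas u^{k+1} = h_k(W_k((u^k+l^k)/2) + b_k + |W_k|((u^k−l^k)/2)) and l^{k+1} = h_k(W_k((u^k+l^k)/2) + b_k − |W_k|((u^k−l^k)/2)). If l^0 ≤ z^0 ≤ u^0, then l^K ≤ z^K ≤ u^K, where z^K is the network output. -/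
open Matrix Finset

/-- soundness of interval bound propagation for a K-layer network. -/
theorem ibp_soundness (K : ℕ) (d : ℕ → ℕ)
    (W : ∀ k : ℕ, Matrix (Fin (d (k + 1))) (Fin (d k)) ℝ)
    (b : ∀ k : ℕ, Fin (d (k + 1)) → ℝ)
    (h : ℕ → ℝ → ℝ) (hmono : ∀ k, Monotone (h k))
    (z l u : ∀ k : ℕ, Fin (d k) → ℝ)
    (hz : ∀ k < K, z (k + 1) = fun i => h k (((W k).mulVec (z k) + b k) i))
    (hl : ∀ k < K, l (k + 1) = fun i =>
      h k (((W k).mulVec (fun j => (u k j + l k j) / 2) + b k) i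
        - ((W k).map (fun x => |x|)).mulVec (fun j => (u k j - l k j) / 2) i))
    (hu : ∀ k < K, u (k + 1) = fun i =>
      h k (((W k).mulVec (fun j => (u k j + l k j) / 2) + b k) i
        + ((W k).map (fun x => |x|)).mulVec (fun j => (u k j - l k j) / 2) i))
    (h0 : ∀ i, l 0 i ≤ z 0 i ∧ z 0 i ≤ u 0 i) :
    ∀ i, l K i ≤ z K i ∧ z K i ≤ u K i := by
  suffices H : ∀ k, k ≤ K → ∀ i, l k i ≤ z k i ∧ z k i ≤ u k i from H K le_rfl
  intro k
  induction k with
  | zero => exact fun _ => h0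
  | succ k ih =>
    intro hk i
    have hkK : k < K := hk
    have IH := ih hkK.le
    rw [hz k hkK, hl k hkK, hu k hkK]
    set m : Fin (d k) → ℝ := fun j => (u k j + l k j) / 2 with hm
    set r : Fin (d k) → ℝ := fun j => (u k j - l k j) / 2 with hr
    have key : |(W k).mulVec (z k) i - (W k).mulVec m i|
        ≤ ((W k).map (fun x => |x|)).mulVec r i := by
      simp only [mulVec, dotProduct, Matrix.map_apply]
      rw [← Finset.sum_sub_distrib]
      refine (Finset.abs_sum_le_sum_abs _ _).trans (Finset.sum_le_sum fun j _ => ?_)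
      rw [← mul_sub, abs_mul]
      refine mul_le_mul_of_nonneg_left ?_ (abs_nonneg _)
      rw [abs_le]
      have := IH j
      constructor <;> simp only [hm, hr] <;> linarith [this.1, this.2]
    rw [abs_le] at key
    constructor
    · apply hmono
      simp only [Pi.add_apply]
      linarith [key.1]
    · apply hmono
      simp only [Pi.add_apply]
      linarith [key.2]
end
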